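/- Let X ~ N(μ_u, σ_u² I) on ℝ^d, and let L_s(x) = P(X_u) L_u(x) + Σ_{j=1}^m P(X_j) L_j(x) be a mixture of isotropic Gaussian densities with nonnegative weights summing to 1. Fix k ∈ {1,…,m}, positive priors P'(X_k), P'(X_s) with P'(X_k) > P'(X_s)·P(X_k) and P(X_u) > 0. If ‖μ_k - μ_u‖²/(σ_k² + σ_u²) ≥ 2·ln((P'(X_k) - P'(X_s)P(X_k))/(P'(X_s)P(X_u))) + d·ln(2σ_u²/(σ_k²+σ_u²)), then P'(X_s)·E[L_s(X)] ≥ P'(X_k)·E[L_k(X)]. -/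

import Mathlib

open MeasureTheory Real

/-- Density of the isotropic Gaussian `N(μ, σ² I)` on `ℝ^d`. -/
noncomputable def gaussDensity (d : ℕ) (μ : EuclideanSpace ℝ (Fin d)) (σ : ℝ) :
    EuclideanSpace ℝ (Fin d) → ℝ :=
  fun x => (2 * π * σ ^ 2) ^ (-(d : ℝ) / 2) * Real.exp (-‖x - μ‖ ^ 2 / (2 * σ ^ 2))

section Aux

variable {d : ℕ}

local notation "E" => EuclideanSpace ℝ (Fin d)

lemma integrable_rexp_neg_mul_sq_norm' {b : ℝ} (hb : 0 < b) :
    Integrable (fun v : E => Real.exp (-b * ‖v‖ ^ 2)) := by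
  have h := (GaussianFourier.integrable_cexp_neg_mul_sq_norm_add (V := E)
    (show (0:ℝ) < ((b : ℂ)).re from hb) 0 0).norm
  simpa [Complex.norm_exp, ← Complex.ofReal_pow] using h

lemma exponent_id (σ1 σ2 : ℝ) (h1 : 0 < σ1) (h2 : 0 < σ2) (μ1 μ2 x : E) :
    ‖x - μ1‖ ^ 2 / (2 * σ1 ^ 2) + ‖x - μ2‖ ^ 2 / (2 * σ2 ^ 2) =
      (σ1 ^ 2 + σ2 ^ 2) / (2 * σ1 ^ 2 * σ2 ^ 2) *
        ‖x - ((σ2 ^ 2 / (σ1 ^ 2 + σ2 ^ 2)) • μ1 + (σ1 ^ 2 / (σ1 ^ 2 + σ2 ^ 2)) • μ2)‖ ^ 2 +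
      ‖μ1 - μ2‖ ^ 2 / (2 * (σ1 ^ 2 + σ2 ^ 2)) := by
  have hs : (0:ℝ) < σ1 ^ 2 + σ2 ^ 2 := by positivity
  set t : ℝ := σ2 ^ 2 / (σ1 ^ 2 + σ2 ^ 2) with ht
  set u : ℝ := σ1 ^ 2 / (σ1 ^ 2 + σ2 ^ 2) with hu
  have htp : 0 < t := by positivity
  have hup : 0 < u := by positivity
  have e1 : ‖x - μ1‖ ^ 2 = ‖x‖ ^ 2 - 2 * inner ℝ x μ1 + ‖μ1‖ ^ 2 := norm_sub_sq_real x μ1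
  have e2 : ‖x - μ2‖ ^ 2 = ‖x‖ ^ 2 - 2 * inner ℝ x μ2 + ‖μ2‖ ^ 2 := norm_sub_sq_real x μ2
  have e3 : ‖μ1 - μ2‖ ^ 2 = ‖μ1‖ ^ 2 - 2 * inner ℝ μ1 μ2 + ‖μ2‖ ^ 2 := norm_sub_sq_real μ1 μ2
  have e4 : ‖x - (t • μ1 + u • μ2)‖ ^ 2
      = ‖x‖ ^ 2 - 2 * inner ℝ x (t • μ1 + u • μ2) + ‖t • μ1 + u • μ2‖ ^ 2 :=
    norm_sub_sq_real x _
  have e5 : (inner ℝ x (t • μ1 + u • μ2) : ℝ) = t * inner ℝ x μ1 + u * inner ℝ x μ2 := by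
    rw [inner_add_right, real_inner_smul_right, real_inner_smul_right]
  have e6 : ‖t • μ1 + u • μ2‖ ^ 2
      = t ^ 2 * ‖μ1‖ ^ 2 + 2 * (t * u * inner ℝ μ1 μ2) + u ^ 2 * ‖μ2‖ ^ 2 := by
    rw [norm_add_sq_real, real_inner_smul_left, real_inner_smul_right, norm_smul, norm_smul]
    simp only [Real.norm_eq_abs, abs_of_pos htp, abs_of_pos hup, mul_pow]
    ring
  rw [e1, e2, e3, e4, e5, e6, ht, hu]
  field_simp
  ring

lemma gauss_prod_eq (σ1 σ2 : ℝ) (h1 : 0 < σ1) (h2 : 0 < σ2) (μ1 μ2 x : E) :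
    gaussDensity d μ1 σ1 x * gaussDensity d μ2 σ2 x =
      ((2 * π * σ1 ^ 2) ^ (-(d : ℝ) / 2) * (2 * π * σ2 ^ 2) ^ (-(d : ℝ) / 2) *
        Real.exp (-‖μ1 - μ2‖ ^ 2 / (2 * (σ1 ^ 2 + σ2 ^ 2)))) *
      Real.exp (-((σ1 ^ 2 + σ2 ^ 2) / (2 * σ1 ^ 2 * σ2 ^ 2)) *
        ‖x - ((σ2 ^ 2 / (σ1 ^ 2 + σ2 ^ 2)) • μ1 + (σ1 ^ 2 / (σ1 ^ 2 + σ2 ^ 2)) • μ2)‖ ^ 2) := by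
  have hexp : Real.exp (-‖x - μ1‖ ^ 2 / (2 * σ1 ^ 2)) * Real.exp (-‖x - μ2‖ ^ 2 / (2 * σ2 ^ 2))
      = Real.exp (-‖μ1 - μ2‖ ^ 2 / (2 * (σ1 ^ 2 + σ2 ^ 2))) *
        Real.exp (-((σ1 ^ 2 + σ2 ^ 2) / (2 * σ1 ^ 2 * σ2 ^ 2)) *
          ‖x - ((σ2 ^ 2 / (σ1 ^ 2 + σ2 ^ 2)) • μ1 + (σ1 ^ 2 / (σ1 ^ 2 + σ2 ^ 2)) • μ2)‖ ^ 2) := by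
    rw [← Real.exp_add, ← Real.exp_add]
    congr 1
    have h := exponent_id σ1 σ2 h1 h2 μ1 μ2 x
    rw [neg_div, neg_div, ← neg_add, h]
    ring
  unfold gaussDensity
  calc (2 * π * σ1 ^ 2) ^ (-(d : ℝ) / 2) * Real.exp (-‖x - μ1‖ ^ 2 / (2 * σ1 ^ 2)) *
        ((2 * π * σ2 ^ 2) ^ (-(d : ℝ) / 2) * Real.exp (-‖x - μ2‖ ^ 2 / (2 * σ2 ^ 2)))
      = (2 * π * σ1 ^ 2) ^ (-(d : ℝ) / 2) * (2 * π * σ2 ^ 2) ^ (-(d : ℝ) / 2) *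
        (Real.exp (-‖x - μ1‖ ^ 2 / (2 * σ1 ^ 2)) * Real.exp (-‖x - μ2‖ ^ 2 / (2 * σ2 ^ 2))) := by
        ring
    _ = _ := by rw [hexp]; ring

lemma integrable_gauss_prod (σ1 σ2 : ℝ) (h1 : 0 < σ1) (h2 : 0 < σ2) (μ1 μ2 : E) :
    Integrable (fun x : E => gaussDensity d μ1 σ1 x * gaussDensity d μ2 σ2 x) := by
  have hb : (0:ℝ) < (σ1 ^ 2 + σ2 ^ 2) / (2 * σ1 ^ 2 * σ2 ^ 2) := by positivity
  simp only [fun x => gauss_prod_eq σ1 σ2 h1 h2 μ1 μ2 x]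
  exact (((integrable_rexp_neg_mul_sq_norm' hb).comp_sub_right _).const_mul _)

lemma gauss_prod_integral (σ1 σ2 : ℝ) (h1 : 0 < σ1) (h2 : 0 < σ2) (μ1 μ2 : E) :
    ∫ x : E, gaussDensity d μ1 σ1 x * gaussDensity d μ2 σ2 x =
      (2 * π * (σ1 ^ 2 + σ2 ^ 2)) ^ (-(d : ℝ) / 2) *
        Real.exp (-‖μ1 - μ2‖ ^ 2 / (2 * (σ1 ^ 2 + σ2 ^ 2))) := by
  have hπ : (0:ℝ) < π := Real.pi_pos
  have hs : (0:ℝ) < σ1 ^ 2 + σ2 ^ 2 := by positivity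
  have hb : (0:ℝ) < (σ1 ^ 2 + σ2 ^ 2) / (2 * σ1 ^ 2 * σ2 ^ 2) := by positivity
  have hC : (0:ℝ) < π / ((σ1 ^ 2 + σ2 ^ 2) / (2 * σ1 ^ 2 * σ2 ^ 2)) := by positivity
  simp only [fun x => gauss_prod_eq σ1 σ2 h1 h2 μ1 μ2 x]
  rw [integral_const_mul]
  rw [MeasureTheory.integral_sub_right_eq_self
    (fun y : E => Real.exp (-((σ1 ^ 2 + σ2 ^ 2) / (2 * σ1 ^ 2 * σ2 ^ 2)) * ‖y‖ ^ 2)) _]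
  rw [GaussianFourier.integral_rexp_neg_mul_sq_norm hb]
  rw [show (Module.finrank ℝ E : ℝ) = (d : ℝ) by rw [finrank_euclideanSpace_fin]]
  have hCe : (π / ((σ1 ^ 2 + σ2 ^ 2) / (2 * σ1 ^ 2 * σ2 ^ 2))) ^ ((d:ℝ) / 2)
      = ((π / ((σ1 ^ 2 + σ2 ^ 2) / (2 * σ1 ^ 2 * σ2 ^ 2)))⁻¹) ^ (-(d:ℝ) / 2) := by
    rw [Real.inv_rpow hC.le, neg_div, Real.rpow_neg hC.le, inv_inv]
  rw [hCe]
  have base : (2 * π * σ1 ^ 2) ^ (-(d:ℝ) / 2) * (2 * π * σ2 ^ 2) ^ (-(d:ℝ) / 2) *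
      ((π / ((σ1 ^ 2 + σ2 ^ 2) / (2 * σ1 ^ 2 * σ2 ^ 2)))⁻¹) ^ (-(d:ℝ) / 2)
      = (2 * π * (σ1 ^ 2 + σ2 ^ 2)) ^ (-(d:ℝ) / 2) := by
    rw [← Real.mul_rpow (by positivity) (by positivity),
      ← Real.mul_rpow (by positivity) (by positivity)]
    congr 1
    field_simp
  calc (2 * π * σ1 ^ 2) ^ (-(d:ℝ) / 2) * (2 * π * σ2 ^ 2) ^ (-(d:ℝ) / 2) *
        Real.exp (-‖μ1 - μ2‖ ^ 2 / (2 * (σ1 ^ 2 + σ2 ^ 2))) *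
        ((π / ((σ1 ^ 2 + σ2 ^ 2) / (2 * σ1 ^ 2 * σ2 ^ 2)))⁻¹) ^ (-(d:ℝ) / 2)
      = ((2 * π * σ1 ^ 2) ^ (-(d:ℝ) / 2) * (2 * π * σ2 ^ 2) ^ (-(d:ℝ) / 2) *
        ((π / ((σ1 ^ 2 + σ2 ^ 2) / (2 * σ1 ^ 2 * σ2 ^ 2)))⁻¹) ^ (-(d:ℝ) / 2)) *
        Real.exp (-‖μ1 - μ2‖ ^ 2 / (2 * (σ1 ^ 2 + σ2 ^ 2))) := by ring
    _ = _ := by rw [base]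

lemma gaussDensity_nonneg (μ0 : E) (σ0 : ℝ) (x : E) : 0 ≤ gaussDensity d μ0 σ0 x := by
  unfold gaussDensity
  positivity

end Aux

/-- Unknown-class case of Theorem 3.2 (Bayesian classification). The index type
`Option (Fin m)` encodes `{1,…,m,u}` with `none = u`. For `X ~ N(μᵤ, σᵤ² I)`,
priors `P'(Xₖ), P'(X_s) > 0` with `P'(Xₖ) > P'(X_s)·P(Xₖ)` and `P(Xᵤ) > 0`, the stated
separability condition implies `P'(X_s)·E[L_s(X)] ≥ P'(Xₖ)·E[Lₖ(X)]`. -/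
theorem bayes_unknown_class (d m : ℕ) (hd : 1 ≤ d)
    (μ : Option (Fin m) → EuclideanSpace ℝ (Fin d))
    (σ : Option (Fin m) → ℝ) (hσ : ∀ i, 0 < σ i)
    (P : Option (Fin m) → ℝ) (hP : ∀ i, 0 ≤ P i) (hPsum : ∑ i, P i = 1)
    (k : Fin m) (Pk' Ps' : ℝ) (hPk' : 0 < Pk') (hPs' : 0 < Ps')
    (hPu : 0 < P none) (hgap : Ps' * P (some k) < Pk')
    (hsep : ‖μ (some k) - μ none‖ ^ 2 / ((σ (some k)) ^ 2 + (σ none) ^ 2) ≥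
      2 * Real.log ((Pk' - Ps' * P (some k)) / (Ps' * P none)) +
        (d : ℝ) * Real.log (2 * (σ none) ^ 2 / ((σ (some k)) ^ 2 + (σ none) ^ 2))) :
    Ps' * ∫ x, (∑ i, P i * gaussDensity d (μ i) (σ i) x) *
        gaussDensity d (μ none) (σ none) x ≥
      Pk' * ∫ x, gaussDensity d (μ (some k)) (σ (some k)) x *
        gaussDensity d (μ none) (σ none) x := by
  have hπ : (0:ℝ) < π := Real.pi_pos
  set G : Option (Fin m) → ℝ := fun j =>
    (2 * π * ((σ j) ^ 2 + (σ none) ^ 2)) ^ (-(d : ℝ) / 2) *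
      Real.exp (-‖μ j - μ none‖ ^ 2 / (2 * ((σ j) ^ 2 + (σ none) ^ 2))) with hG
  have hGpos : ∀ j, 0 < G j := fun j => by
    have : (0:ℝ) < (σ j) ^ 2 + (σ none) ^ 2 := by
      have := hσ j; have := hσ none; positivity
    rw [hG]; positivity
  have hInt : ∀ j, ∫ x, gaussDensity d (μ j) (σ j) x * gaussDensity d (μ none) (σ none) x
      = G j := fun j => gauss_prod_integral (σ j) (σ none) (hσ j) (hσ none) (μ j) (μ none)
  -- compute the LHS integral
  have hLHS : ∫ x, (∑ i, P i * gaussDensity d (μ i) (σ i) x) *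
      gaussDensity d (μ none) (σ none) x = ∑ i, P i * G i := by
    have : ∀ x : EuclideanSpace ℝ (Fin d),
        (∑ i, P i * gaussDensity d (μ i) (σ i) x) * gaussDensity d (μ none) (σ none) x
        = ∑ i, P i * (gaussDensity d (μ i) (σ i) x * gaussDensity d (μ none) (σ none) x) := by
      intro x; rw [Finset.sum_mul]; exact Finset.sum_congr rfl fun i _ => by ring
    simp only [this]
    rw [integral_finset_sum _ (fun i _ =>
      (integrable_gauss_prod (σ i) (σ none) (hσ i) (hσ none) (μ i) (μ none)).const_mul (P i))]
    exact Finset.sum_congr rfl fun i _ => by rw [integral_const_mul, hInt i]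
  rw [hLHS, hInt (some k)]
  -- lower bound the sum by the k and u terms
  have hsum : P (some k) * G (some k) + P none * G none ≤ ∑ i, P i * G i := by
    have hsub : ({some k, none} : Finset (Option (Fin m))) ⊆ Finset.univ :=
      Finset.subset_univ _
    have := Finset.sum_le_sum_of_subset_of_nonneg hsub
      (fun i _ _ => mul_nonneg (hP i) (hGpos i).le)
    rwa [Finset.sum_pair (by simp : (some k : Option (Fin m)) ≠ none)] at this
  -- the key inequality
  have hA : (0:ℝ) < Pk' - Ps' * P (some k) := by linarith
  have hB : (0:ℝ) < Ps' * P none := by positivity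
  have hs : (0:ℝ) < (σ (some k)) ^ 2 + (σ none) ^ 2 := by
    have := hσ (some k); have := hσ none; positivity
  have ht : (0:ℝ) < 2 * (σ none) ^ 2 := by have := hσ none; positivity
  have hkey : (Pk' - Ps' * P (some k)) * G (some k) ≤ Ps' * P none * G none := by
    have hGu : G none = (2 * π * (2 * (σ none) ^ 2)) ^ (-(d : ℝ) / 2) := by
      rw [hG]; simp [two_mul]
    rw [hGu, hG]
    have lhs_eq : (Pk' - Ps' * P (some k)) *
        ((2 * π * ((σ (some k)) ^ 2 + (σ none) ^ 2)) ^ (-(d : ℝ) / 2) *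
          Real.exp (-‖μ (some k) - μ none‖ ^ 2 / (2 * ((σ (some k)) ^ 2 + (σ none) ^ 2))))
        = Real.exp (Real.log (Pk' - Ps' * P (some k)) +
            (Real.log (2 * π * ((σ (some k)) ^ 2 + (σ none) ^ 2)) * (-(d : ℝ) / 2) +
            -‖μ (some k) - μ none‖ ^ 2 / (2 * ((σ (some k)) ^ 2 + (σ none) ^ 2)))) := by
      rw [Real.exp_add, Real.exp_add, Real.exp_log hA,
        ← Real.rpow_def_of_pos (by positivity)]
    have rhs_eq : Ps' * P none * (2 * π * (2 * (σ none) ^ 2)) ^ (-(d : ℝ) / 2)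
        = Real.exp (Real.log (Ps' * P none) +
            Real.log (2 * π * (2 * (σ none) ^ 2)) * (-(d : ℝ) / 2)) := by
      rw [Real.exp_add, Real.exp_log hB, ← Real.rpow_def_of_pos (by positivity)]
    rw [lhs_eq, rhs_eq]
    apply Real.exp_le_exp.mpr
    have l1 : Real.log (2 * π * (2 * (σ none) ^ 2))
        = Real.log (2 * π) + Real.log (2 * (σ none) ^ 2) :=
      Real.log_mul (by positivity) (by positivity)
    have l2 : Real.log (2 * π * ((σ (some k)) ^ 2 + (σ none) ^ 2))
        = Real.log (2 * π) + Real.log ((σ (some k)) ^ 2 + (σ none) ^ 2) :=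
      Real.log_mul (by positivity) (by positivity)
    have l3 : Real.log ((Pk' - Ps' * P (some k)) / (Ps' * P none))
        = Real.log (Pk' - Ps' * P (some k)) - Real.log (Ps' * P none) :=
      Real.log_div hA.ne' hB.ne'
    have l4 : Real.log (2 * (σ none) ^ 2 / ((σ (some k)) ^ 2 + (σ none) ^ 2))
        = Real.log (2 * (σ none) ^ 2) - Real.log ((σ (some k)) ^ 2 + (σ none) ^ 2) :=
      Real.log_div ht.ne' hs.ne'
    rw [l3, l4] at hsep
    have hdiv : -‖μ (some k) - μ none‖ ^ 2 / (2 * ((σ (some k)) ^ 2 + (σ none) ^ 2))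
        = -((‖μ (some k) - μ none‖ ^ 2 / ((σ (some k)) ^ 2 + (σ none) ^ 2)) / 2) := by
      field_simp
    rw [l1, l2, hdiv]
    linarith [hsep]
  calc Pk' * G (some k)
      = Ps' * (P (some k) * G (some k)) + (Pk' - Ps' * P (some k)) * G (some k) := by ring
    _ ≤ Ps' * (P (some k) * G (some k)) + Ps' * P none * G none := by linarith [hkey]
    _ = Ps' * (P (some k) * G (some k) + P none * G none) := by ring
    _ ≤ Ps' * ∑ i, P i * G i := mul_le_mul_of_nonneg_left hsum hPs'.le
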